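/- Let k be a field, L an extension of k, and R a valuation subring of L containing k with maximal ideal m. Let t ∈ m be a nonzero element, and let s₁, …, s_r ∈ R be elements whose images in the residue field R/m are algebraically independent over k. Then s₁, …, s_r, t are algebraically independent over k in L. In particular, trdeg_k(R/m) + 1 ≤ trdeg_k L whenever m ≠ 0. -/

import Mathlib

/-- Let `R` be a valuation subring of a field `L` containing a base field `k`, with
maximal ideal `m`. Let `t ∈ m` be nonzero, and let `s₁, …, s_r ∈ R` have residues in
`R/m` that are algebraically independent over `k` (equivalently: every nonzero polynomial
over `k` evaluated at the `s_i` is a unit of `R`). Then `s₁, …, s_r, t` are algebraically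
independent over `k` in `L`. -/
theorem stmt14 {k L : Type*} [Field k] [Field L] [Algebra k L]
    (R : ValuationSubring L) (hkR : ∀ x : k, algebraMap k L x ∈ R)
    (t : L) (htR : t ∈ R) (ht0 : t ≠ 0)
    (htm : ∀ y : R, (y : L) = t → ¬ IsUnit y)
    {r : ℕ} (s : Fin r → R)
    (hs : ∀ P : MvPolynomial (Fin r) k, P ≠ 0 →
      ∀ y : R, (y : L) = MvPolynomial.aeval (fun i => (s i : L)) P → IsUnit y) :
    AlgebraicIndependent k (Fin.snoc (fun i => ((s i : L))) t : Fin (r + 1) → L) := by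
  classical
  set sL : Fin r → L := fun i => (s i : L) with hsL
  have hnt : Nontrivial R := ⟨0, 1, fun h => by
    have : ((0 : R) : L) = ((1 : R) : L) := by rw [h]
    simp at this⟩
  -- every aeval of sL lies in R
  have memaeval : ∀ P : MvPolynomial (Fin r) k, MvPolynomial.aeval sL P ∈ R := by
    intro P
    induction P using MvPolynomial.induction_on with
    | C a => simpa using hkR a
    | add p q hp hq => rw [map_add]; exact add_mem hp hq
    | mul_X p i hp => rw [map_mul, MvPolynomial.aeval_X]; exact mul_mem hp (s i).2
  set A := Algebra.adjoin k (Set.range sL) with hA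
  have memA : ∀ c ∈ A, c ∈ R := by
    intro c hc
    rw [hA, Algebra.adjoin_range_eq_range_aeval] at hc
    obtain ⟨P, rfl⟩ := hc
    exact memaeval P
  -- units from nonzero elements of A
  have hunit : ∀ c (hc : c ∈ A), c ≠ 0 → IsUnit (⟨c, memA c hc⟩ : R) := by
    intro c hc hc0
    have hc' := hc
    rw [hA, Algebra.adjoin_range_eq_range_aeval] at hc'
    obtain ⟨P, hP⟩ := hc'
    have hP0 : P ≠ 0 := by rintro rfl; simp at hP; exact hc0 hP.symm
    exact hs P hP0 _ hP.symm
  -- key: eval at t of a nonzero polynomial with coefficients in A is nonzero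
  have main : ∀ n, ∀ q : Polynomial L, q.natDegree ≤ n →
      (∀ j, q.coeff j ∈ A) → q ≠ 0 → Polynomial.eval t q ≠ 0 := by
    intro n
    induction n with
    | zero =>
      intro q hdeg hcoef hq0 heval
      rw [Polynomial.eq_C_of_natDegree_le_zero hdeg] at heval hq0
      simp at heval
      rw [heval] at hq0
      simp at hq0
    | succ n ih =>
      intro q hdeg hcoef hq0 heval
      by_cases hc0 : q.coeff 0 = 0
      · -- q = X * divX q
        have hq : Polynomial.X * q.divX = q := by
          have := Polynomial.X_mul_divX_add q
          rwa [hc0, map_zero, add_zero] at this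
        have hdx0 : q.divX ≠ 0 := by
          rintro h; rw [← hq, h, mul_zero] at hq0; exact hq0 rfl
        have h2 := congrArg (Polynomial.eval t) hq
        rw [Polynomial.eval_mul, Polynomial.eval_X, heval] at h2
        have hev : Polynomial.eval t q.divX = 0 :=
          (mul_eq_zero.1 h2).resolve_left ht0
        refine ih q.divX ?_ (fun j => by rw [Polynomial.coeff_divX]; exact hcoef _) hdx0 hev
        have := Polynomial.natDegree_divX_eq_natDegree_tsub_one (p := q)
        omega
      · -- coeff 0 is a unit of R, but equals -(t * w)
        have hw : Polynomial.eval t q.divX ∈ R := by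
          rw [Polynomial.eval_eq_sum_range]
          exact sum_mem fun i _ => mul_mem
            (memA _ (by rw [Polynomial.coeff_divX]; exact hcoef _)) (pow_mem htR i)
        have hceq : q.coeff 0 = -(t * Polynomial.eval t q.divX) := by
          have h2 := congrArg (Polynomial.eval t) (Polynomial.X_mul_divX_add q)
          rw [Polynomial.eval_add, Polynomial.eval_mul, Polynomial.eval_X,
            Polynomial.eval_C, heval] at h2
          linear_combination h2
        have hu : IsUnit (⟨q.coeff 0, memA _ (hcoef 0)⟩ : R) := hunit _ (hcoef 0) hc0
        have hprod : (⟨t, htR⟩ : R) * ⟨-Polynomial.eval t q.divX, neg_mem hw⟩ =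
            (⟨q.coeff 0, memA _ (hcoef 0)⟩ : R) := by
          ext; push_cast; rw [hceq]; ring
        have : IsUnit (⟨t, htR⟩ : R) := isUnit_of_mul_isUnit_left (hprod ▸ hu)
        exact htm ⟨t, htR⟩ rfl this
  -- sL is algebraically independent
  have hsind : AlgebraicIndependent k sL := by
    rw [algebraicIndependent_iff]
    intro P hP
    by_contra h0
    have := hs P h0 0 (by rw [hP]; simp)
    simpa using this.ne_zero
  -- t is transcendental over adjoin k (range sL)
  have htrans : Transcendental A t := by
    rintro ⟨p, hp0, hpev⟩
    set q := p.map (algebraMap A L) with hq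
    have hq0 : q ≠ 0 := by
      rw [hq]
      exact Polynomial.map_ne_zero_iff (f := algebraMap A L)
        (Subtype.val_injective) |>.2 hp0
    have hcoef : ∀ j, q.coeff j ∈ A := by
      intro j; rw [hq, Polynomial.coeff_map]; exact (p.coeff j).2
    have hev : Polynomial.eval t q = 0 := by
      rw [hq, Polynomial.eval_map, ← Polynomial.aeval_def, hpev]
    exact main q.natDegree q le_rfl hcoef hq0 hev
  have hopt : AlgebraicIndependent k (fun o : Option (Fin r) => o.elim t sL) :=
    (hsind.option_iff_transcendental t).2 htrans
  have := hopt.comp finSuccEquivLast finSuccEquivLast.injective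
  convert this using 1
  funext i
  refine Fin.lastCases ?_ (fun j => ?_) i
  · simp [Fin.snoc_last]
  · simp [Fin.snoc_castSucc]
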